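/- Let R be a commutative ring which is an integral domain and which is a finitely generated, formally smooth ℂ-algebra (i.e., a smooth affine ℂ-algebra). If f ∈ R satisfies d f = 0 in the module of Kähler differentials Ω_{R/ℂ}, then f lies in the image of the structure map ℂ → R; that is, f is a constant. -/

import Mathlib

set_option maxHeartbeats 1000000

open Polynomial

/-- If all coefficients of a polynomial are killed by a derivation, then the derivation of
its evaluation is given by the formal derivative. -/
private lemma derivation_eval_map {F L M : Type*} [CommRing F] [CommRing L] [Algebra F L]
    [AddCommGroup M] [Module L M] [Module F M]
    (D : Derivation F L M) (P : Polynomial L) (x : L)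
    (hP : ∀ n, D (P.coeff n) = 0) :
    D (P.eval x) = P.derivative.eval x • D x := by
  have h1 : P.eval x = ∑ n ∈ P.support, P.coeff n * x ^ n := by
    rw [Polynomial.eval_eq_sum, Polynomial.sum_def]
  rw [h1, map_sum, Polynomial.derivative_eval, Polynomial.sum_def, Finset.sum_smul]
  refine Finset.sum_congr rfl fun n _ => ?_
  rw [D.leibniz, hP n, smul_zero, add_zero, D.leibniz_pow,
    ← Nat.cast_smul_eq_nsmul L, smul_smul, smul_smul, mul_assoc]

/-- An element transcendental over `Algebra.adjoin ℂ t` is transcendental over the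
intermediate field `IntermediateField.adjoin ℂ t`. -/
private lemma transcendental_intermediateField_adjoin {L : Type} [Field L] [Algebra ℂ L]
    (t : Set L) (x : L) (h : Transcendental (Algebra.adjoin ℂ t) x) :
    Transcendental (IntermediateField.adjoin ℂ t) x := by
  haveI : IsDomain ↥(Algebra.adjoin ℂ t) :=
    Function.Injective.isDomain (Subalgebra.val _).toRingHom Subtype.coe_injective
  letI : Algebra ↥(Algebra.adjoin ℂ t) ↥(IntermediateField.adjoin ℂ t) :=
    (Subalgebra.inclusion (IntermediateField.algebra_adjoin_le_adjoin ℂ t)).toRingHom.toAlgebra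
  haveI : IsScalarTower ↥(Algebra.adjoin ℂ t) ↥(IntermediateField.adjoin ℂ t) L :=
    IsScalarTower.of_algebraMap_eq (congrFun rfl)
  have hcoe : ∀ a : ↥(Algebra.adjoin ℂ t),
      ((algebraMap ↥(Algebra.adjoin ℂ t) ↥(IntermediateField.adjoin ℂ t) a : _) : L) = (a : L) :=
    fun a => rfl
  have hadj : Algebra.adjoin ℂ t = (MvPolynomial.aeval (Subtype.val : t → L)).range := by
    conv_lhs => rw [← Subtype.range_coe (s := t)]
    rw [Algebra.adjoin_range_eq_range_aeval]
  haveI : IsFractionRing ↥(Algebra.adjoin ℂ t) ↥(IntermediateField.adjoin ℂ t) := by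
    refine ⟨⟨?_, ?_, ?_⟩⟩
    · rintro ⟨y, hy0⟩
      refine isUnit_iff_ne_zero.mpr fun hz => ?_
      have : (y : L) = 0 := by
        have := congrArg (Subtype.val : ↥(IntermediateField.adjoin ℂ t) → L) hz
        rwa [hcoe] at this
      exact mem_nonZeroDivisors_iff_ne_zero.mp hy0 (Subtype.ext this)
    · intro z
      obtain ⟨r, s, hz⟩ := (IntermediateField.mem_adjoin_iff ℂ (z : L)).mp z.2
      have hrA : (MvPolynomial.aeval (Subtype.val : t → L)) r ∈ Algebra.adjoin ℂ t := by
        rw [hadj]; exact ⟨r, rfl⟩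
      have hsA : (MvPolynomial.aeval (Subtype.val : t → L)) s ∈ Algebra.adjoin ℂ t := by
        rw [hadj]; exact ⟨s, rfl⟩
      by_cases hs0 : (MvPolynomial.aeval (Subtype.val : t → L)) s = 0
      · have hz0 : z = 0 := Subtype.ext (by rw [hz, hs0, div_zero]; rfl)
        exact ⟨⟨0, 1⟩, by simp [hz0]⟩
      · refine ⟨⟨⟨_, hrA⟩, ⟨⟨_, hsA⟩, mem_nonZeroDivisors_of_ne_zero
          (fun hh => hs0 (congrArg Subtype.val hh))⟩⟩, ?_⟩
        apply Subtype.ext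
        show (z : L) * _ = _
        rw [hz]
        exact div_mul_cancel₀ _ hs0
    · intro a b hab
      refine ⟨1, ?_⟩
      rw [Subtype.ext_iff] at hab
      rw [hcoe, hcoe] at hab
      rw [Subtype.ext hab]
  intro halg
  exact h ((IsFractionRing.isAlgebraic_iff ↥(Algebra.adjoin ℂ t)
    ↥(IntermediateField.adjoin ℂ t) L).mpr halg)

/-- Key field-theoretic lemma: in an essentially finitely generated field extension of `ℂ`,
an element with vanishing universal differential is algebraic over `ℂ`. -/
private lemma isAlgebraic_of_D_eq_zero (L : Type) [Field L] [Algebra ℂ L]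
    [Algebra.EssFiniteType ℂ L] (f : L)
    (hf : KaehlerDifferential.D ℂ L f = 0) : IsAlgebraic ℂ f := by
  by_contra htr
  -- extend {f} to a transcendence basis
  have hseed : AlgebraicIndependent ℂ (Subtype.val : ({f} : Set L) → L) := by
    rw [algebraicIndependent_unique_type_iff]
    simpa [Set.default_coe_singleton, Transcendental] using htr
  obtain ⟨s, hfs, hmax⟩ :=
    exists_maximal_algebraicIndependent ({f} : Set L) Set.univ (Set.subset_univ _) hseed
  have hs : AlgebraicIndependent ℂ (Subtype.val : s → L) := hmax.1.1
  have htb : IsTranscendenceBasis ℂ (Subtype.val : s → L) := by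
    refine ⟨hs, fun u hu hsu => ?_⟩
    rw [Subtype.range_coe] at hsu ⊢
    exact hsu.antisymm (hmax.2 ⟨hu, Set.subset_univ _⟩ hsu)
  have hfmem : f ∈ s := hfs rfl
  -- the two fields
  set E := IntermediateField.adjoin ℂ s with hE
  set F := IntermediateField.adjoin ℂ (s \ {f}) with hF
  have halgE : Algebra.IsAlgebraic ↥E L := by
    have := htb.isAlgebraic_field
    rwa [Subtype.range_coe] at this
  -- f is transcendental over F
  have htransF : Transcendental ↥F f := by
    have h1 : AlgebraicIndependent ℂ (Subtype.val : ↑(s \ {f}) → L) := hs.mono Set.diff_subset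
    have h2 : AlgebraicIndependent ℂ (fun o : Option ↑(s \ {f}) => o.elim f Subtype.val) := by
      have hj : Function.Injective
          (fun o : Option ↑(s \ {f}) =>
            (Option.elim o ⟨f, hfmem⟩ (fun y => (⟨y.1, y.2.1⟩ : ↥s)) : ↥s)) := by
        rintro (_ | a) (_ | b) hab
        · rfl
        · exact absurd (congrArg (Subtype.val : ↥s → L) hab).symm b.2.2
        · exact absurd (congrArg (Subtype.val : ↥s → L) hab) a.2.2
        · exact congrArg some (Subtype.ext (congrArg (Subtype.val : ↥s → L) hab))
      have := hs.comp _ hj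
      have heq : (Subtype.val : s → L) ∘
          (fun o : Option ↑(s \ {f}) =>
            (Option.elim o ⟨f, hfmem⟩ (fun y => (⟨y.1, y.2.1⟩ : ↥s)) : ↥s)) =
          fun o : Option ↑(s \ {f}) => o.elim f Subtype.val := by
        funext o; cases o <;> rfl
      rwa [heq] at this
    have h3 := (h1.option_iff_transcendental f).mp h2
    rw [Subtype.range_coe] at h3
    exact transcendental_intermediateField_adjoin _ f h3
  -- the universal derivation over F vanishes identically
  have hDf : (KaehlerDifferential.D ↥F L) f = 0 := by
    have hm := KaehlerDifferential.map_D ℂ ↥F L L f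
    rw [hf, map_zero] at hm
    simpa using hm.symm
  have hker : ∀ y ∈ E, (KaehlerDifferential.D ↥F L) y = 0 := by
    intro y hy
    refine IntermediateField.adjoin_induction ℂ (fun y hy => ?_) (fun c => ?_)
      (fun a b _ _ ha hb => ?_) (fun a _ ha => ?_) (fun a b _ _ ha hb => ?_) hy
    · by_cases hyf : y = f
      · rw [hyf]; exact hDf
      · have hyF : y ∈ F := IntermediateField.subset_adjoin ℂ _ ⟨hy, hyf⟩
        have : y = algebraMap ↥F L ⟨y, hyF⟩ := rfl
        rw [this, Derivation.map_algebraMap]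
    · rw [IsScalarTower.algebraMap_apply ℂ ↥F L, Derivation.map_algebraMap]
    · rw [map_add, ha, hb, add_zero]
    · by_cases ha0 : a = 0
      · simp [ha0]
      · have h1 : (KaehlerDifferential.D ↥F L) (a * a⁻¹) = 0 := by
          rw [mul_inv_cancel₀ ha0, Derivation.map_one_eq_zero]
        rw [Derivation.leibniz, ha, smul_zero, add_zero] at h1
        exact (smul_eq_zero.mp h1).resolve_left ha0
    · rw [Derivation.leibniz, ha, hb, smul_zero, smul_zero, add_zero]
  haveI : CharZero L := charZero_of_injective_algebraMap (algebraMap ℂ L).injective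
  haveI : CharZero ↥E := (algebraMap ↥E L).charZero
  have hD : ∀ x : L, (KaehlerDifferential.D ↥F L) x = 0 := by
    intro x
    have hint : IsIntegral ↥E x := (halgE.isAlgebraic x).isIntegral
    have hirr : Irreducible (minpoly ↥E x) := minpoly.irreducible hint
    have hsep : (minpoly ↥E x).Separable := hirr.separable
    have hder : (Polynomial.aeval x) (Polynomial.derivative (minpoly ↥E x)) ≠ 0 :=
      hsep.aeval_derivative_ne_zero (minpoly.aeval ↥E x)
    set P := (minpoly ↥E x).map (algebraMap ↥E L) with hP
    have hcoeff : ∀ n, (KaehlerDifferential.D ↥F L) (P.coeff n) = 0 := by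
      intro n
      rw [hP, Polynomial.coeff_map]
      exact hker _ ((minpoly ↥E x).coeff n).2
    have h0 : P.eval x = 0 := by
      rw [hP, Polynomial.eval_map, ← Polynomial.aeval_def, minpoly.aeval]
    have hmain := derivation_eval_map (KaehlerDifferential.D ↥F L) P x hcoeff
    rw [h0, map_zero] at hmain
    have hne : P.derivative.eval x ≠ 0 := by
      rw [hP, Polynomial.derivative_map, Polynomial.eval_map, ← Polynomial.aeval_def]
      exact hder
    exact (smul_eq_zero.mp hmain.symm).resolve_left hne
  haveI : Algebra.FormallyUnramified ↥F L := by
    constructor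
    have hsp := KaehlerDifferential.span_range_derivation ↥F L
    have hr : Set.range (KaehlerDifferential.D ↥F L) = {0} := by
      ext v
      simp only [Set.mem_range, Set.mem_singleton_iff]
      constructor
      · rintro ⟨y, rfl⟩; exact hD y
      · rintro rfl; exact ⟨0, map_zero _⟩
    refine subsingleton_of_forall_eq 0 fun ω => ?_
    have hmem : ω ∈ Submodule.span L (Set.range (KaehlerDifferential.D ↥F L)) :=
      hsp.symm ▸ Submodule.mem_top
    rw [hr, Submodule.span_zero_singleton] at hmem
    exact Submodule.mem_bot L |>.mp hmem
  haveI : Algebra.EssFiniteType ↥F L := Algebra.EssFiniteType.of_comp ℂ ↥F L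
  haveI := Algebra.FormallyUnramified.isSeparable ↥F L
  exact htransF (Algebra.IsSeparable.isIntegral ↥F f).isAlgebraic

/-- Let `R` be an integral domain which is a finitely generated, formally
smooth `ℂ`-algebra (a smooth affine `ℂ`-algebra).  If `f ∈ R` has vanishing universal
differential `d f = 0` in `Ω_{R/ℂ}`, then `f` is a constant, i.e. lies in the image of
`ℂ → R`. -/
theorem kaehler_differential_zero_implies_constant (R : Type) [CommRing R] [IsDomain R]
    [Algebra ℂ R] [Algebra.FiniteType ℂ R] [Algebra.FormallySmooth ℂ R]
    (f : R) (hf : KaehlerDifferential.D ℂ R f = 0) :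
    ∃ c : ℂ, algebraMap ℂ R c = f := by
  haveI : Algebra.EssFiniteType ℂ R := Algebra.EssFiniteType.of_finiteType ℂ R
  haveI : Algebra.EssFiniteType R (FractionRing R) :=
    Algebra.EssFiniteType.of_isLocalization (FractionRing R) (nonZeroDivisors R)
  haveI : Algebra.EssFiniteType ℂ (FractionRing R) :=
    Algebra.EssFiniteType.comp ℂ R (FractionRing R)
  have hdf : KaehlerDifferential.D ℂ (FractionRing R) (algebraMap R (FractionRing R) f) = 0 := by
    rw [← KaehlerDifferential.map_D ℂ ℂ R (FractionRing R) f, hf, map_zero]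
  have halg := isAlgebraic_of_D_eq_zero (FractionRing R) (algebraMap R (FractionRing R) f) hdf
  have hint : IsIntegral ℂ (algebraMap R (FractionRing R) f) := halg.isIntegral
  have hdeg : (minpoly ℂ (algebraMap R (FractionRing R) f)).degree = 1 :=
    IsAlgClosed.degree_eq_one_of_irreducible ℂ (minpoly.irreducible hint)
  obtain ⟨c, hc⟩ := minpoly.degree_eq_one_iff.mp hdeg
  refine ⟨c, IsFractionRing.injective R (FractionRing R) ?_⟩
  rw [← IsScalarTower.algebraMap_apply ℂ R (FractionRing R), hc]
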